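/- Let K₁, K₂ ≥ 0 and set γ₁ = K₁K₂/((K₁+1)(K₂+1)) and γ₂ = (K₁+K₂+1)/((K₁+1)(K₂+1)). Let h̄₂ ∈ ℂ^{1×N} and H̄₁ ∈ ℂ^{N×M} be deterministic with every entry of h̄₂ and of H̄₁ having modulus 1, and let Φ be a deterministic N×N diagonal matrix whose diagonal entries all have modulus 1. Let g ∈ ℂ^{1×M}, H̃₁ ∈ ℂ^{N×M}, and h̃₂ ∈ ℂ^{1×N} be random with all of their scalar entries (across all three objects) mutually independent, square-integrable, of zero mean and with E[|·|²] = 1. Define h₂ = √(K₂/(K₂+1))·h̄₂ + √(1/(K₂+1))·h̃₂ and H₁ = √(K₁/(K₁+1))·H̄₁ + √(1/(K₁+1))·H̃₁. Then E[‖h₂ Φ H₁ + g‖²] = γ₁‖h̄₂ Φ H̄₁‖² + γ₂ M N + M. -/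

import Mathlib

open MeasureTheory ProbabilityTheory Matrix

section helpers
open scoped ComplexConjugate
variable {Ω : Type*} [MeasurableSpace Ω] {μ : Measure Ω}
-- integrability of product of two L² functions
lemma myL2mul {f g : Ω → ℂ} (hf : MemLp f 2 μ) (hg : MemLp g 2 μ) :
    Integrable (fun ω => f ω * g ω) μ := by
  have hfi : Integrable (fun ω => ‖f ω‖ ^ 2) μ :=
    (memLp_two_iff_integrable_sq_norm hf.1).1 hf
  have hgi : Integrable (fun ω => ‖g ω‖ ^ 2) μ :=
    (memLp_two_iff_integrable_sq_norm hg.1).1 hg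
  refine Integrable.mono' ((hfi.add hgi).const_mul (1/2 : ℝ)) (hf.1.mul hg.1) ?_
  filter_upwards with ω
  simp only [Pi.add_apply, norm_mul]
  nlinarith [norm_nonneg (f ω), norm_nonneg (g ω), sq_nonneg (‖f ω‖ - ‖g ω‖)]

lemma myconj_int {f : Ω → ℂ} (hf : Integrable f μ) :
    Integrable (fun ω => conj (f ω)) μ := by
  refine ⟨RCLike.continuous_conj.comp_aestronglyMeasurable hf.1, ?_⟩
  simpa [HasFiniteIntegral] using hf.2

lemma myconj_mem {f : Ω → ℂ} (hf : MemLp f 2 μ) :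
    MemLp (fun ω => conj (f ω)) 2 μ := by
  refine ⟨RCLike.continuous_conj.comp_aestronglyMeasurable hf.1, ?_⟩
  simpa [eLpNorm, eLpNorm'] using hf.2

lemma mymeas_conj : Measurable fun z : ℂ => (conj z : ℂ) := RCLike.continuous_conj.measurable

lemma myindep_integral_mul {X Y : Ω → ℂ} (h : IndepFun X Y μ)
    (hX : Integrable X μ) (hY : Integrable Y μ) :
    ∫ ω, X ω * Y ω ∂μ = (∫ ω, X ω ∂μ) * ∫ ω, Y ω ∂μ := by
  have mre : Measurable fun z : ℂ => z.re := Complex.measurable_re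
  have mim : Measurable fun z : ℂ => z.im := Complex.measurable_im
  have hXr : Integrable (fun ω => (X ω).re) μ := hX.re
  have hXi : Integrable (fun ω => (X ω).im) μ := hX.im
  have hYr : Integrable (fun ω => (Y ω).re) μ := hY.re
  have hYi : Integrable (fun ω => (Y ω).im) μ := hY.im
  have hrr : ∫ ω, (X ω).re * (Y ω).re ∂μ = (∫ ω, (X ω).re ∂μ) * ∫ ω, (Y ω).re ∂μ :=
    (h.comp mre mre).integral_mul_eq_mul_integral hXr.1 hYr.1
  have hri : ∫ ω, (X ω).re * (Y ω).im ∂μ = (∫ ω, (X ω).re ∂μ) * ∫ ω, (Y ω).im ∂μ :=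
    (h.comp mre mim).integral_mul_eq_mul_integral hXr.1 hYi.1
  have hir : ∫ ω, (X ω).im * (Y ω).re ∂μ = (∫ ω, (X ω).im ∂μ) * ∫ ω, (Y ω).re ∂μ :=
    (h.comp mim mre).integral_mul_eq_mul_integral hXi.1 hYr.1
  have hii : ∫ ω, (X ω).im * (Y ω).im ∂μ = (∫ ω, (X ω).im ∂μ) * ∫ ω, (Y ω).im ∂μ :=
    (h.comp mim mim).integral_mul_eq_mul_integral hXi.1 hYi.1
  have hmul : Integrable (fun ω => X ω * Y ω) μ := h.integrable_mul hX hY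
  have hrr' : Integrable (fun ω => (X ω).re * (Y ω).re) μ :=
    ((h.comp mre mre).integrable_mul hXr hYr).congr (by filter_upwards with ω; simp)
  have hii' : Integrable (fun ω => (X ω).im * (Y ω).im) μ :=
    ((h.comp mim mim).integrable_mul hXi hYi).congr (by filter_upwards with ω; simp)
  have hri' : Integrable (fun ω => (X ω).re * (Y ω).im) μ :=
    ((h.comp mre mim).integrable_mul hXr hYi).congr (by filter_upwards with ω; simp)
  have hir' : Integrable (fun ω => (X ω).im * (Y ω).re) μ :=
    ((h.comp mim mre).integrable_mul hXi hYr).congr (by filter_upwards with ω; simp)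
  apply Complex.ext
  · have h1 : ∫ ω, (X ω * Y ω).re ∂μ = Complex.re (∫ ω, X ω * Y ω ∂μ) := by
      simpa using integral_re (𝕜 := ℂ) hmul
    rw [← h1]
    have : ∀ ω, (X ω * Y ω).re = (X ω).re * (Y ω).re - (X ω).im * (Y ω).im := by
      intro ω; simp [Complex.mul_re]
    simp only [this]
    rw [integral_sub hrr' hii', hrr, hii]
    have e1 : Complex.re (∫ ω, X ω ∂μ) = ∫ ω, (X ω).re ∂μ := by
      simpa using (integral_re (𝕜 := ℂ) hX).symm
    have e2 : Complex.im (∫ ω, X ω ∂μ) = ∫ ω, (X ω).im ∂μ := by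
      simpa using (integral_im (𝕜 := ℂ) hX).symm
    have e3 : Complex.re (∫ ω, Y ω ∂μ) = ∫ ω, (Y ω).re ∂μ := by
      simpa using (integral_re (𝕜 := ℂ) hY).symm
    have e4 : Complex.im (∫ ω, Y ω ∂μ) = ∫ ω, (Y ω).im ∂μ := by
      simpa using (integral_im (𝕜 := ℂ) hY).symm
    rw [Complex.mul_re, e1, e2, e3, e4]
  · have h1 : ∫ ω, (X ω * Y ω).im ∂μ = Complex.im (∫ ω, X ω * Y ω ∂μ) := by
      simpa using integral_im (𝕜 := ℂ) hmul
    rw [← h1]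
    have : ∀ ω, (X ω * Y ω).im = (X ω).re * (Y ω).im + (X ω).im * (Y ω).re := by
      intro ω; simp [Complex.mul_im]
    simp only [this]
    rw [integral_add hri' hir', hri, hir]
    have e1 : Complex.re (∫ ω, X ω ∂μ) = ∫ ω, (X ω).re ∂μ := by
      simpa using (integral_re (𝕜 := ℂ) hX).symm
    have e2 : Complex.im (∫ ω, X ω ∂μ) = ∫ ω, (X ω).im ∂μ := by
      simpa using (integral_im (𝕜 := ℂ) hX).symm
    have e3 : Complex.re (∫ ω, Y ω ∂μ) = ∫ ω, (Y ω).re ∂μ := by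
      simpa using (integral_re (𝕜 := ℂ) hY).symm
    have e4 : Complex.im (∫ ω, Y ω ∂μ) = ∫ ω, (Y ω).im ∂μ := by
      simpa using (integral_im (𝕜 := ℂ) hY).symm
    rw [Complex.mul_im, e1, e2, e3, e4]

lemma myorth_symm {Z W : Ω → ℂ} (h : ∫ ω, Z ω * conj (W ω) ∂μ = 0) :
    ∫ ω, W ω * conj (Z ω) ∂μ = 0 := by
  have e : (fun ω => W ω * conj (Z ω)) = fun ω => conj (Z ω * conj (W ω)) := by
    funext ω; simp [_root_.map_mul, mul_comm]
  rw [e, integral_conj, h, map_zero]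

lemma myzero_left {X Y : Ω → ℂ} (h : IndepFun X Y μ)
    (hX : Integrable X μ) (hY : Integrable Y μ) (h0 : ∫ ω, X ω ∂μ = 0) :
    ∫ ω, X ω * conj (Y ω) ∂μ = 0 := by
  have h' : IndepFun X (fun ω => conj (Y ω)) μ :=
    h.comp measurable_id RCLike.continuous_conj.measurable
  rw [myindep_integral_mul h' hX (myconj_int hY), h0, zero_mul]

lemma myindep_memℒp_mul {X Y : Ω → ℂ} (h : IndepFun X Y μ)
    (hX : MemLp X 2 μ) (hY : MemLp Y 2 μ) :
    MemLp (fun ω => X ω * Y ω) 2 μ := by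
  rw [show (fun ω => X ω * Y ω) = X * Y from rfl,
    memLp_two_iff_integrable_sq_norm (hX.1.mul hY.1)]
  have hXi : Integrable (fun ω => ‖X ω‖ ^ 2) μ :=
    (memLp_two_iff_integrable_sq_norm hX.1).1 hX
  have hYi : Integrable (fun ω => ‖Y ω‖ ^ 2) μ :=
    (memLp_two_iff_integrable_sq_norm hY.1).1 hY
  have hind : IndepFun (fun ω => ‖X ω‖ ^ 2) (fun ω => ‖Y ω‖ ^ 2) μ :=
    h.comp (continuous_norm.pow 2).measurable (continuous_norm.pow 2).measurable
  have := hind.integrable_mul hXi hYi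
  exact this.congr (by filter_upwards with ω; simp [norm_mul, mul_pow])

lemma myindep_sqnorm_int {X Y : Ω → ℂ} (h : IndepFun X Y μ)
    (hX : MemLp X 2 μ) (hY : MemLp Y 2 μ) :
    ∫ ω, ‖X ω * Y ω‖ ^ 2 ∂μ = (∫ ω, ‖X ω‖ ^ 2 ∂μ) * ∫ ω, ‖Y ω‖ ^ 2 ∂μ := by
  have hXi : Integrable (fun ω => ‖X ω‖ ^ 2) μ :=
    (memLp_two_iff_integrable_sq_norm hX.1).1 hX
  have hYi : Integrable (fun ω => ‖Y ω‖ ^ 2) μ :=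
    (memLp_two_iff_integrable_sq_norm hY.1).1 hY
  have hind : IndepFun (fun ω => ‖X ω‖ ^ 2) (fun ω => ‖Y ω‖ ^ 2) μ :=
    h.comp (continuous_norm.pow 2).measurable (continuous_norm.pow 2).measurable
  have h2 : ∫ ω, ‖X ω‖ ^ 2 * ‖Y ω‖ ^ 2 ∂μ
      = (∫ ω, ‖X ω‖ ^ 2 ∂μ) * ∫ ω, ‖Y ω‖ ^ 2 ∂μ :=
    hind.integral_mul_eq_mul_integral hXi.1 hYi.1
  rw [← h2]; congr 1; funext ω; simp [norm_mul, mul_pow]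

lemma myiIndep_ae {ι : Type*} {f f' : ι → Ω → ℂ}
    (hf : iIndepFun f μ) (h : ∀ i, f i =ᵐ[μ] f' i) :
    iIndepFun f' μ := by
  rw [iIndepFun_iff_measure_inter_preimage_eq_mul] at hf ⊢
  intro S sets hsets
  have h1 : ∀ i ∈ S, μ (f' i ⁻¹' sets i) = μ (f i ⁻¹' sets i) := by
    intro i _
    apply measure_congr
    filter_upwards [h i] with ω hω
    show (f' i ω ∈ sets i) = (f i ω ∈ sets i)
    rw [hω]
  have h2 : μ (⋂ i ∈ S, f' i ⁻¹' sets i) = μ (⋂ i ∈ S, f i ⁻¹' sets i) := by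
    apply measure_congr
    have hae : ∀ᵐ ω ∂μ, ∀ i ∈ (S : Set ι), f i ω = f' i ω :=
      (ae_ball_iff S.countable_toSet).2 fun i _ => h i
    filter_upwards [hae] with ω hω
    show (ω ∈ ⋂ i ∈ S, f' i ⁻¹' sets i) = (ω ∈ ⋂ i ∈ S, f i ⁻¹' sets i)
    simp only [eq_iff_iff, Set.mem_iInter, Set.mem_preimage]
    constructor
    · intro hh i hi; rw [hω i hi]; exact hh i hi
    · intro hh i hi; rw [← hω i hi]; exact hh i hi
  rw [h2, hf S hsets]
  exact (Finset.prod_congr rfl h1).symm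

lemma myint_norm_sq_sum {ι : Type*} [Fintype ι] (Z : ι → Ω → ℂ)
    (hL2 : ∀ i, MemLp (Z i) 2 μ)
    (horth : ∀ i j, i ≠ j → ∫ ω, Z i ω * conj (Z j ω) ∂μ = 0) :
    ∫ ω, ‖∑ i, Z i ω‖ ^ 2 ∂μ = ∑ i, ∫ ω, ‖Z i ω‖ ^ 2 ∂μ := by
  classical
  have hsq : ∀ z : ℂ, (z * conj z).re = ‖z‖ ^ 2 := by
    intro z
    rw [Complex.mul_conj, Complex.ofReal_re, Complex.normSq_eq_norm_sq]
  have hint : ∀ i j, Integrable (fun ω => Z i ω * conj (Z j ω)) μ := by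
    intro i j
    exact myL2mul (hL2 i) (myconj_mem (hL2 j))
  have hint' : ∀ i j, Integrable (fun ω => (Z i ω * conj (Z j ω)).re) μ :=
    fun i j => (hint i j).re
  have hpt : ∀ ω, ‖∑ i, Z i ω‖ ^ 2 = ∑ i, ∑ j, (Z i ω * conj (Z j ω)).re := by
    intro ω
    rw [← hsq, map_sum (starRingEnd ℂ), Finset.sum_mul_sum, Complex.re_sum]
    exact Finset.sum_congr rfl fun i _ => Complex.re_sum _ _
  calc ∫ ω, ‖∑ i, Z i ω‖ ^ 2 ∂μ
      = ∫ ω, ∑ i, ∑ j, (Z i ω * conj (Z j ω)).re ∂μ :=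
        integral_congr_ae (ae_of_all _ hpt)
    _ = ∑ i, ∑ j, ∫ ω, (Z i ω * conj (Z j ω)).re ∂μ := by
        rw [integral_finset_sum _ fun i _ => integrable_finset_sum _ fun j _ => hint' i j]
        exact Finset.sum_congr rfl fun i _ => integral_finset_sum _ fun j _ => hint' i j
    _ = ∑ i, ∫ ω, ‖Z i ω‖ ^ 2 ∂μ := by
        refine Finset.sum_congr rfl fun i _ => ?_
        rw [Finset.sum_eq_single i]
        · exact integral_congr_ae (ae_of_all _ fun ω => hsq _)
        · intro j _ hj
          have h1 : ∫ ω, (Z i ω * conj (Z j ω)).re ∂μ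
              = Complex.re (∫ ω, Z i ω * conj (Z j ω) ∂μ) := by
            simpa using integral_re (𝕜 := ℂ) (hint i j)
          rw [h1, horth i j (Ne.symm hj)]
          simp
        · intro hi; exact absurd (Finset.mem_univ i) hi

lemma myzero_right {X Y : Ω → ℂ} (h : IndepFun X Y μ)
    (hX : Integrable X μ) (hY : Integrable Y μ) (h0 : ∫ ω, Y ω ∂μ = 0) :
    ∫ ω, X ω * conj (Y ω) ∂μ = 0 := by
  have h' : IndepFun X (fun ω => conj (Y ω)) μ :=
    h.comp measurable_id RCLike.continuous_conj.measurable
  rw [myindep_integral_mul h' hX (myconj_int hY), integral_conj, h0, map_zero, mul_zero]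

lemma myconst_pull (c c' : ℂ) (W W' : Ω → ℂ) (h : ∫ ω, W ω * conj (W' ω) ∂μ = 0) :
    ∫ ω, (c * W ω) * conj (c' * W' ω) ∂μ = 0 := by
  have e : ∀ ω, (c * W ω) * conj (c' * W' ω) = (c * conj c') * (W ω * conj (W' ω)) := by
    intro ω; simp only [_root_.map_mul]; ring
  simp only [e]
  rw [integral_const_mul, h, mul_zero]

lemma myconst_pull_r (c' : ℂ) (W W' : Ω → ℂ) (h : ∫ ω, W ω * conj (W' ω) ∂μ = 0) :
    ∫ ω, W ω * conj (c' * W' ω) ∂μ = 0 := by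
  have e : ∀ ω, W ω * conj (c' * W' ω) = (conj c') * (W ω * conj (W' ω)) := by
    intro ω; simp only [_root_.map_mul]; ring
  simp only [e]
  rw [integral_const_mul, h, mul_zero]

lemma myconst_pull_l (c : ℂ) (W W' : Ω → ℂ) (h : ∫ ω, W ω * conj (W' ω) ∂μ = 0) :
    ∫ ω, (c * W ω) * conj (W' ω) ∂μ = 0 := by
  have e : ∀ ω, (c * W ω) * conj (W' ω) = c * (W ω * conj (W' ω)) := by
    intro ω; ring
  simp only [e]
  rw [integral_const_mul, h, mul_zero]


lemma myDleft (c0 : ℂ) {W : Ω → ℂ} (h0 : ∫ ω, W ω ∂μ = 0) :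
    ∫ ω, c0 * conj (W ω) ∂μ = 0 := by
  rw [integral_const_mul, integral_conj, h0, map_zero, mul_zero]

lemma myDright (c0 : ℂ) {W : Ω → ℂ} (h0 : ∫ ω, W ω ∂μ = 0) :
    ∫ ω, W ω * conj c0 ∂μ = 0 := myorth_symm (myDleft c0 h0)


lemma myper_m {N : ℕ} [IsProbabilityMeasure μ]
    (c1 c2 d1 d2 : ℂ) (a b e : Fin N → ℂ)
    (ha : ∀ n, ‖a n‖ = 1) (hb : ∀ n, ‖b n‖ = 1) (he : ∀ n, ‖e n‖ = 1)
    (G : Ω → ℂ) (T U : Fin N → Ω → ℂ)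
    (hG2 : MemLp G 2 μ) (hT2 : ∀ n, MemLp (T n) 2 μ) (hU2 : ∀ n, MemLp (U n) 2 μ)
    (hG0 : ∫ ω, G ω ∂μ = 0) (hT0 : ∀ n, ∫ ω, T n ω ∂μ = 0)
    (hU0 : ∀ n, ∫ ω, U n ω ∂μ = 0)
    (hG1 : ∫ ω, ‖G ω‖ ^ 2 ∂μ = 1) (hT1 : ∀ n, ∫ ω, ‖T n ω‖ ^ 2 ∂μ = 1)
    (hU1 : ∀ n, ∫ ω, ‖U n ω‖ ^ 2 ∂μ = 1)
    (hIGT : ∀ n, IndepFun G (T n) μ)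
    (hIGU : ∀ n, IndepFun G (U n) μ)
    (hIGP : ∀ n, IndepFun G (fun ω => U n ω * T n ω) μ)
    (hIUT : ∀ n n', IndepFun (U n) (T n') μ)
    (hITT : ∀ n n', n ≠ n' → IndepFun (T n) (T n') μ)
    (hIUU : ∀ n n', n ≠ n' → IndepFun (U n) (U n') μ)
    (hITP : ∀ n n', n ≠ n' → IndepFun (T n) (fun ω => U n' ω * T n' ω) μ)
    (hIUP : ∀ n n', n ≠ n' → IndepFun (U n) (fun ω => U n' ω * T n' ω) μ)
    (hIPP : ∀ n n', n ≠ n' →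
      IndepFun (fun ω => U n ω * T n ω) (fun ω => U n' ω * T n' ω) μ) :
    Integrable (fun ω =>
        ‖(∑ n, (c2 * a n + d2 * U n ω) * (b n * (c1 * e n + d1 * T n ω))) + G ω‖ ^ 2) μ
    ∧ ∫ ω, ‖(∑ n, (c2 * a n + d2 * U n ω) * (b n * (c1 * e n + d1 * T n ω))) + G ω‖ ^ 2 ∂μ
      = ‖c1‖ ^ 2 * ‖c2‖ ^ 2 * ‖∑ n, a n * (b n * e n)‖ ^ 2
        + (‖c2‖ ^ 2 * ‖d1‖ ^ 2 + ‖d2‖ ^ 2 * ‖c1‖ ^ 2 + ‖d2‖ ^ 2 * ‖d1‖ ^ 2) * N + 1 := by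
  classical
  set D : ℂ := c1 * c2 * ∑ n, a n * (b n * e n) with hD
  set Z : (Unit ⊕ Unit) ⊕ (Fin N ⊕ (Fin N ⊕ Fin N)) → Ω → ℂ :=
    Sum.elim (Sum.elim (fun _ _ => D) (fun _ => G))
      (Sum.elim (fun n ω => (c2 * a n * b n * d1) * T n ω)
        (Sum.elim (fun n ω => (d2 * b n * c1 * e n) * U n ω)
          (fun n ω => (d2 * d1 * b n) * (U n ω * T n ω)))) with hZdef
  have hGint : Integrable G μ := hG2.integrable one_le_two
  have hTint : ∀ n, Integrable (T n) μ := fun n => (hT2 n).integrable one_le_two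
  have hUint : ∀ n, Integrable (U n) μ := fun n => (hU2 n).integrable one_le_two
  have hPmem : ∀ n, MemLp (fun ω => U n ω * T n ω) 2 μ :=
    fun n => myindep_memℒp_mul (hIUT n n) (hU2 n) (hT2 n)
  have hPint : ∀ n, Integrable (fun ω => U n ω * T n ω) μ :=
    fun n => (hPmem n).integrable one_le_two
  have hP0 : ∀ n, ∫ ω, U n ω * T n ω ∂μ = 0 := by
    intro n
    rw [myindep_integral_mul (hIUT n n) (hUint n) (hTint n), hU0, zero_mul]
  have mulconj_meas : Measurable fun z : ℂ => z * conj z :=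
    measurable_id.mul RCLike.continuous_conj.measurable
  have oTP : ∀ n, ∫ ω, T n ω * conj (U n ω * T n ω) ∂μ = 0 := by
    intro n
    have e1 : ∀ ω, T n ω * conj (U n ω * T n ω)
        = (T n ω * conj (T n ω)) * conj (U n ω) := by
      intro ω; simp only [_root_.map_mul]; ring
    simp only [e1]
    exact myzero_right (((hIUT n n).symm).comp mulconj_meas measurable_id)
      (myL2mul (hT2 n) (myconj_mem (hT2 n))) (hUint n) (hU0 n)
  have oUP : ∀ n, ∫ ω, U n ω * conj (U n ω * T n ω) ∂μ = 0 := by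
    intro n
    have e1 : ∀ ω, U n ω * conj (U n ω * T n ω)
        = (U n ω * conj (U n ω)) * conj (T n ω) := by
      intro ω; simp only [_root_.map_mul]; ring
    simp only [e1]
    exact myzero_right ((hIUT n n).comp mulconj_meas measurable_id)
      (myL2mul (hU2 n) (myconj_mem (hU2 n))) (hTint n) (hT0 n)
  have hEZ : ∀ i, i ≠ Sum.inl (Sum.inl ()) → ∫ ω, Z i ω ∂μ = 0 := by
    rintro ((u | u) | (n | (n | n))) hi
    · exact absurd rfl hi
    · simpa [hZdef] using hG0
    · simp only [hZdef, Sum.elim_inr, Sum.elim_inl]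
      rw [integral_const_mul, hT0 n, mul_zero]
    · simp only [hZdef, Sum.elim_inr, Sum.elim_inl]
      rw [integral_const_mul, hU0 n, mul_zero]
    · simp only [hZdef, Sum.elim_inr]
      rw [integral_const_mul, hP0 n, mul_zero]
  have hZ2 : ∀ i, MemLp (Z i) 2 μ := by
    rintro ((u | u) | (n | (n | n)))
    · simpa [hZdef] using memLp_const (μ := μ) (p := 2) D
    · simpa [hZdef] using hG2
    · exact (hT2 n).const_mul _
    · exact (hU2 n).const_mul _
    · exact (hPmem n).const_mul _
  have hTm : ∀ n, ∫ ω, (c2 * a n * b n * d1) * T n ω ∂μ = 0 := by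
    intro n; rw [integral_const_mul, hT0 n, mul_zero]
  have hUm : ∀ n, ∫ ω, (d2 * b n * c1 * e n) * U n ω ∂μ = 0 := by
    intro n; rw [integral_const_mul, hU0 n, mul_zero]
  have hPm : ∀ n, ∫ ω, (d2 * d1 * b n) * (U n ω * T n ω) ∂μ = 0 := by
    intro n; rw [integral_const_mul, hP0 n, mul_zero]
  have oGT : ∀ n, ∫ ω, G ω * conj (T n ω) ∂μ = 0 :=
    fun n => myzero_left (hIGT n) hGint (hTint n) hG0
  have oGU : ∀ n, ∫ ω, G ω * conj (U n ω) ∂μ = 0 :=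
    fun n => myzero_left (hIGU n) hGint (hUint n) hG0
  have oGP : ∀ n, ∫ ω, G ω * conj (U n ω * T n ω) ∂μ = 0 :=
    fun n => myzero_left (hIGP n) hGint (hPint n) hG0
  have oUT : ∀ n n', ∫ ω, U n ω * conj (T n' ω) ∂μ = 0 :=
    fun n n' => myzero_left (hIUT n n') (hUint n) (hTint n') (hU0 n)
  have oTU : ∀ n n', ∫ ω, T n ω * conj (U n' ω) ∂μ = 0 :=
    fun n n' => myzero_left ((hIUT n' n).symm) (hTint n) (hUint n') (hT0 n)
  have oTT : ∀ n n', n ≠ n' → ∫ ω, T n ω * conj (T n' ω) ∂μ = 0 :=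
    fun n n' h => myzero_left (hITT n n' h) (hTint n) (hTint n') (hT0 n)
  have oUU : ∀ n n', n ≠ n' → ∫ ω, U n ω * conj (U n' ω) ∂μ = 0 :=
    fun n n' h => myzero_left (hIUU n n' h) (hUint n) (hUint n') (hU0 n)
  have oTPd : ∀ n n', n ≠ n' → ∫ ω, T n ω * conj (U n' ω * T n' ω) ∂μ = 0 :=
    fun n n' h => myzero_left (hITP n n' h) (hTint n) (hPint n') (hT0 n)
  have oUPd : ∀ n n', n ≠ n' → ∫ ω, U n ω * conj (U n' ω * T n' ω) ∂μ = 0 :=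
    fun n n' h => myzero_left (hIUP n n' h) (hUint n) (hPint n') (hU0 n)
  have oPPd : ∀ n n', n ≠ n' →
      ∫ ω, (U n ω * T n ω) * conj (U n' ω * T n' ω) ∂μ = 0 :=
    fun n n' h => myzero_left (hIPP n n' h) (hPint n) (hPint n') (hP0 n)
  have oPT : ∀ n n', ∫ ω, (U n ω * T n ω) * conj (T n' ω) ∂μ = 0 := by
    intro n n'
    by_cases hnn : n = n'
    · subst hnn; exact myorth_symm (oTP n)
    · exact myzero_left ((hITP n' n (Ne.symm hnn)).symm) (hPint n) (hTint n') (hP0 n)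
  have oPU : ∀ n n', ∫ ω, (U n ω * T n ω) * conj (U n' ω) ∂μ = 0 := by
    intro n n'
    by_cases hnn : n = n'
    · subst hnn; exact myorth_symm (oUP n)
    · exact myzero_left ((hIUP n' n (Ne.symm hnn)).symm) (hPint n) (hUint n') (hP0 n)
  have horth : ∀ i j, i ≠ j → ∫ ω, Z i ω * conj (Z j ω) ∂μ = 0 := by
    rintro ((u | u) | (n | (n | n))) ((u' | u') | (n' | (n' | n'))) hij <;>
      simp only [hZdef, Sum.elim_inl, Sum.elim_inr]
    · exact absurd rfl hij
    · exact myDleft D hG0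
    · exact myDleft D (hTm n')
    · exact myDleft D (hUm n')
    · exact myDleft D (hPm n')
    · exact myDright D hG0
    · exact absurd rfl hij
    · exact myconst_pull_r _ _ _ (oGT n')
    · exact myconst_pull_r _ _ _ (oGU n')
    · exact myconst_pull_r _ _ _ (oGP n')
    · exact myDright D (hTm n)
    · exact myconst_pull_l _ _ _ (myorth_symm (oGT n))
    · have hnn : n ≠ n' := fun h => hij (by rw [h])
      exact myconst_pull _ _ _ _ (oTT n n' hnn)
    · exact myconst_pull _ _ _ _ (oTU n n')
    · by_cases hnn : n = n'
      · subst hnn; exact myconst_pull _ _ _ _ (oTP n)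
      · exact myconst_pull _ _ _ _ (oTPd n n' hnn)
    · exact myDright D (hUm n)
    · exact myconst_pull_l _ _ _ (myorth_symm (oGU n))
    · exact myconst_pull _ _ _ _ (oUT n n')
    · have hnn : n ≠ n' := fun h => hij (by rw [h])
      exact myconst_pull _ _ _ _ (oUU n n' hnn)
    · by_cases hnn : n = n'
      · subst hnn; exact myconst_pull _ _ _ _ (oUP n)
      · exact myconst_pull _ _ _ _ (oUPd n n' hnn)
    · exact myDright D (hPm n)
    · exact myconst_pull_l _ _ _ (myorth_symm (oGP n))
    · exact myconst_pull _ _ _ _ (oPT n n')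
    · exact myconst_pull _ _ _ _ (oPU n n')
    · have hnn : n ≠ n' := fun h => hij (by rw [h])
      exact myconst_pull _ _ _ _ (oPPd n n' hnn)
  have hsum : ∀ ω, (∑ n, (c2 * a n + d2 * U n ω) * (b n * (c1 * e n + d1 * T n ω))) + G ω
      = ∑ i, Z i ω := by
    intro ω
    simp only [Fintype.sum_sum_type, hZdef, Sum.elim_inl, Sum.elim_inr,
      Finset.univ_unique, Finset.sum_const, Finset.card_singleton, one_smul]
    have hterm : ∀ n, (c2 * a n + d2 * U n ω) * (b n * (c1 * e n + d1 * T n ω))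
        = c1 * c2 * (a n * (b n * e n)) + ((c2 * a n * b n * d1) * T n ω
          + ((d2 * b n * c1 * e n) * U n ω + (d2 * d1 * b n) * (U n ω * T n ω))) := by
      intro n; ring
    simp only [hterm, Finset.sum_add_distrib, ← Finset.mul_sum]
    rw [← hD]
    ring
  have hSmem : MemLp (fun ω => ∑ i, Z i ω) 2 μ :=
    memLp_finset_sum _ fun i _ => hZ2 i
  constructor
  · simp only [hsum]
    exact (memLp_two_iff_integrable_sq_norm hSmem.1).1 hSmem
  · simp only [hsum]
    rw [myint_norm_sq_sum Z hZ2 horth]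
    simp only [Fintype.sum_sum_type, hZdef, Sum.elim_inl, Sum.elim_inr,
      Finset.univ_unique, Finset.sum_const, Finset.card_singleton, one_smul]
    have vD : ∫ (_ : Ω), ‖D‖ ^ 2 ∂μ
        = ‖c1‖ ^ 2 * ‖c2‖ ^ 2 * ‖∑ n, a n * (b n * e n)‖ ^ 2 := by
      rw [integral_const]
      simp [hD, norm_mul, mul_pow, measure_univ]
    have vT : ∀ n, ∫ ω, ‖(c2 * a n * b n * d1) * T n ω‖ ^ 2 ∂μ
        = ‖c2‖ ^ 2 * ‖d1‖ ^ 2 := by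
      intro n
      simp only [norm_mul, mul_pow]
      rw [integral_const_mul, hT1 n, mul_one, ha n, hb n]
      ring
    have vU : ∀ n, ∫ ω, ‖(d2 * b n * c1 * e n) * U n ω‖ ^ 2 ∂μ
        = ‖d2‖ ^ 2 * ‖c1‖ ^ 2 := by
      intro n
      simp only [norm_mul, mul_pow]
      rw [integral_const_mul, hU1 n, mul_one, hb n, he n]
      ring
    have vP : ∀ n, ∫ ω, ‖(d2 * d1 * b n) * (U n ω * T n ω)‖ ^ 2 ∂μ
        = ‖d2‖ ^ 2 * ‖d1‖ ^ 2 := by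
      intro n
      have e1 : ∀ ω, ‖(d2 * d1 * b n) * (U n ω * T n ω)‖ ^ 2
          = ‖d2 * d1 * b n‖ ^ 2 * ‖U n ω * T n ω‖ ^ 2 := by
        intro ω; rw [norm_mul, mul_pow]
      simp only [e1]
      rw [integral_const_mul, myindep_sqnorm_int (hIUT n n) (hU2 n) (hT2 n),
        hU1 n, hT1 n, mul_one, mul_one]
      simp [norm_mul, mul_pow, hb n]
    simp only [vT, vU, vP, Finset.sum_const, Finset.card_univ, Fintype.card_fin,
      nsmul_eq_mul]
    rw [vD, hG1]
    ring
end helpers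

open scoped ComplexConjugate

/-- Second-moment identity underlying Lemma 1:
`E[‖h₂ Φ H₁ + g‖²] = γ₁‖h̄₂ Φ H̄₁‖² + γ₂ M N + M`. -/
theorem lemma1_second_moment_identity
    {Ω : Type*} [MeasurableSpace Ω] (μ : Measure Ω) [IsProbabilityMeasure μ]
    {N M : ℕ} (K₁ K₂ : ℝ) (hK₁ : 0 ≤ K₁) (hK₂ : 0 ≤ K₂)
    (hbar₂ : Fin N → ℂ) (Hbar₁ : Matrix (Fin N) (Fin M) ℂ)
    (hhbar₂ : ∀ n, ‖hbar₂ n‖ = 1) (hHbar₁ : ∀ n m, ‖Hbar₁ n m‖ = 1)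
    (φd : Fin N → ℂ) (hφd : ∀ n, ‖φd n‖ = 1)
    (g : Ω → Fin M → ℂ) (Ht₁ : Ω → Matrix (Fin N) (Fin M) ℂ) (ht₂ : Ω → Fin N → ℂ)
    (hIndep : iIndepFun
      (fun (i : Fin M ⊕ ((Fin N × Fin M) ⊕ Fin N)) ω =>
        Sum.elim (fun m => g ω m)
          (Sum.elim (fun p => Ht₁ ω p.1 p.2) (fun n => ht₂ ω n)) i) μ)
    (hg2 : ∀ m, MemLp (fun ω => g ω m) 2 μ)
    (hgMean : ∀ m, ∫ ω, g ω m ∂μ = 0)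
    (hgVar : ∀ m, ∫ ω, ‖g ω m‖ ^ 2 ∂μ = 1)
    (hH2 : ∀ n m, MemLp (fun ω => Ht₁ ω n m) 2 μ)
    (hHMean : ∀ n m, ∫ ω, Ht₁ ω n m ∂μ = 0)
    (hHVar : ∀ n m, ∫ ω, ‖Ht₁ ω n m‖ ^ 2 ∂μ = 1)
    (hh2 : ∀ n, MemLp (fun ω => ht₂ ω n) 2 μ)
    (hhMean : ∀ n, ∫ ω, ht₂ ω n ∂μ = 0)
    (hhVar : ∀ n, ∫ ω, ‖ht₂ ω n‖ ^ 2 ∂μ = 1) :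
    ∫ ω, ∑ m, ‖Matrix.vecMul
        (fun n => (Real.sqrt (K₂ / (K₂ + 1)) : ℂ) * hbar₂ n
          + (Real.sqrt (1 / (K₂ + 1)) : ℂ) * ht₂ ω n)
        (Matrix.diagonal φd *
          ((Real.sqrt (K₁ / (K₁ + 1)) : ℂ) • Hbar₁
            + (Real.sqrt (1 / (K₁ + 1)) : ℂ) • Ht₁ ω)) m + g ω m‖ ^ 2 ∂μ
      = (K₁ * K₂ / ((K₁ + 1) * (K₂ + 1)))
          * ∑ m, ‖Matrix.vecMul hbar₂ (Matrix.diagonal φd * Hbar₁) m‖ ^ 2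
        + ((K₁ + K₂ + 1) / ((K₁ + 1) * (K₂ + 1))) * M * N + M := by
  classical
  have hK₁1 : (0:ℝ) < K₁ + 1 := by linarith
  have hK₂1 : (0:ℝ) < K₂ + 1 := by linarith
  set c1 : ℂ := (Real.sqrt (K₁ / (K₁ + 1)) : ℂ) with hc1def
  set d1 : ℂ := (Real.sqrt (1 / (K₁ + 1)) : ℂ) with hd1def
  set c2 : ℂ := (Real.sqrt (K₂ / (K₂ + 1)) : ℂ) with hc2def
  set d2 : ℂ := (Real.sqrt (1 / (K₂ + 1)) : ℂ) with hd2def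
  have nc1 : ‖c1‖ ^ 2 = K₁ / (K₁ + 1) := by
    rw [hc1def, Complex.norm_real, Real.norm_eq_abs,
      abs_of_nonneg (Real.sqrt_nonneg _), Real.sq_sqrt (div_nonneg hK₁ hK₁1.le)]
  have nd1 : ‖d1‖ ^ 2 = 1 / (K₁ + 1) := by
    rw [hd1def, Complex.norm_real, Real.norm_eq_abs,
      abs_of_nonneg (Real.sqrt_nonneg _),
      Real.sq_sqrt (div_nonneg zero_le_one hK₁1.le)]
  have nc2 : ‖c2‖ ^ 2 = K₂ / (K₂ + 1) := by
    rw [hc2def, Complex.norm_real, Real.norm_eq_abs,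
      abs_of_nonneg (Real.sqrt_nonneg _), Real.sq_sqrt (div_nonneg hK₂ hK₂1.le)]
  have nd2 : ‖d2‖ ^ 2 = 1 / (K₂ + 1) := by
    rw [hd2def, Complex.norm_real, Real.norm_eq_abs,
      abs_of_nonneg (Real.sqrt_nonneg _),
      Real.sq_sqrt (div_nonneg zero_le_one hK₂1.le)]
  -- the family of basic random variables and its measurable modification
  set f : (Fin M ⊕ ((Fin N × Fin M) ⊕ Fin N)) → Ω → ℂ :=
    fun i ω => Sum.elim (fun m => g ω m)
      (Sum.elim (fun p => Ht₁ ω p.1 p.2) (fun n => ht₂ ω n)) i with hfdef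
  have hf2 : ∀ i, MemLp (f i) 2 μ := by
    rintro (m | (p | n))
    · exact hg2 m
    · exact hH2 p.1 p.2
    · exact hh2 n
  set f' : (Fin M ⊕ ((Fin N × Fin M) ⊕ Fin N)) → Ω → ℂ :=
    fun i => (hf2 i).1.mk (f i) with hf'def
  have hmeas : ∀ i, Measurable (f' i) :=
    fun i => (hf2 i).1.stronglyMeasurable_mk.measurable
  have hae : ∀ i, f i =ᵐ[μ] f' i := fun i => (hf2 i).1.ae_eq_mk
  have hf'2 : ∀ i, MemLp (f' i) 2 μ := fun i => (hf2 i).ae_eq (hae i)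
  have hIndep' : iIndepFun f' μ := myiIndep_ae hIndep hae
  set G' : Fin M → Ω → ℂ := fun m => f' (Sum.inl m) with hG'def
  set T' : Fin N → Fin M → Ω → ℂ := fun n m => f' (Sum.inr (Sum.inl (n, m))) with hT'def
  set U' : Fin N → Ω → ℂ := fun n => f' (Sum.inr (Sum.inr n)) with hU'def
  -- transferred moments
  have hG'0 : ∀ m, ∫ ω, G' m ω ∂μ = 0 := by
    intro m; rw [← integral_congr_ae (hae (Sum.inl m))]; exact hgMean m
  have hT'0 : ∀ n m, ∫ ω, T' n m ω ∂μ = 0 := by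
    intro n m; rw [← integral_congr_ae (hae (Sum.inr (Sum.inl (n, m))))]
    exact hHMean n m
  have hU'0 : ∀ n, ∫ ω, U' n ω ∂μ = 0 := by
    intro n; rw [← integral_congr_ae (hae (Sum.inr (Sum.inr n)))]; exact hhMean n
  have hG'1 : ∀ m, ∫ ω, ‖G' m ω‖ ^ 2 ∂μ = 1 := by
    intro m
    have h : (fun ω => ‖g ω m‖ ^ 2) =ᵐ[μ] fun ω => ‖G' m ω‖ ^ 2 := by
      filter_upwards [hae (Sum.inl m)] with ω hω
      rw [show g ω m = G' m ω from hω]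
    rw [← integral_congr_ae h]; exact hgVar m
  have hT'1 : ∀ n m, ∫ ω, ‖T' n m ω‖ ^ 2 ∂μ = 1 := by
    intro n m
    have h : (fun ω => ‖Ht₁ ω n m‖ ^ 2) =ᵐ[μ] fun ω => ‖T' n m ω‖ ^ 2 := by
      filter_upwards [hae (Sum.inr (Sum.inl (n, m)))] with ω hω
      rw [show Ht₁ ω n m = T' n m ω from hω]
    rw [← integral_congr_ae h]; exact hHVar n m
  have hU'1 : ∀ n, ∫ ω, ‖U' n ω‖ ^ 2 ∂μ = 1 := by
    intro n
    have h : (fun ω => ‖ht₂ ω n‖ ^ 2) =ᵐ[μ] fun ω => ‖U' n ω‖ ^ 2 := by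
      filter_upwards [hae (Sum.inr (Sum.inr n))] with ω hω
      rw [show ht₂ ω n = U' n ω from hω]
    rw [← integral_congr_ae h]; exact hhVar n
  -- per-m result
  have perm : ∀ m : Fin M,
      Integrable (fun ω =>
        ‖(∑ n, (c2 * hbar₂ n + d2 * U' n ω)
            * (φd n * (c1 * Hbar₁ n m + d1 * T' n m ω))) + G' m ω‖ ^ 2) μ
      ∧ ∫ ω, ‖(∑ n, (c2 * hbar₂ n + d2 * U' n ω)
            * (φd n * (c1 * Hbar₁ n m + d1 * T' n m ω))) + G' m ω‖ ^ 2 ∂μ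
        = ‖c1‖ ^ 2 * ‖c2‖ ^ 2 * ‖∑ n, hbar₂ n * (φd n * Hbar₁ n m)‖ ^ 2
          + (‖c2‖ ^ 2 * ‖d1‖ ^ 2 + ‖d2‖ ^ 2 * ‖c1‖ ^ 2 + ‖d2‖ ^ 2 * ‖d1‖ ^ 2) * N + 1 := by
    intro m
    refine myper_m c1 c2 d1 d2 hbar₂ φd (fun n => Hbar₁ n m) hhbar₂ hφd
      (fun n => hHbar₁ n m) (G' m) (fun n => T' n m) U'
      (hf'2 _) (fun n => hf'2 _) (fun n => hf'2 _)
      (hG'0 m) (fun n => hT'0 n m) hU'0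
      (hG'1 m) (fun n => hT'1 n m) hU'1
      ?_ ?_ ?_ ?_ ?_ ?_ ?_ ?_ ?_
    · exact fun n => hIndep'.indepFun (by simp)
    · exact fun n => hIndep'.indepFun (by simp)
    · exact fun n => hIndep'.indepFun_mul_right hmeas
        (Sum.inl m) (Sum.inr (Sum.inr n)) (Sum.inr (Sum.inl (n, m)))
        (by simp) (by simp)
    · exact fun n n' => hIndep'.indepFun (by simp)
    · intro n n' hnn
      exact hIndep'.indepFun (by simp [Prod.ext_iff, hnn])
    · intro n n' hnn
      exact hIndep'.indepFun (by simp [hnn])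
    · intro n n' hnn
      exact hIndep'.indepFun_mul_right hmeas
        (Sum.inr (Sum.inl (n, m))) (Sum.inr (Sum.inr n')) (Sum.inr (Sum.inl (n', m)))
        (by simp) (by simp [Prod.ext_iff, hnn])
    · intro n n' hnn
      exact hIndep'.indepFun_mul_right hmeas
        (Sum.inr (Sum.inr n)) (Sum.inr (Sum.inr n')) (Sum.inr (Sum.inl (n', m)))
        (by simp [hnn]) (by simp)
    · intro n n' hnn
      exact hIndep'.indepFun_mul_mul hmeas
        (Sum.inr (Sum.inr n)) (Sum.inr (Sum.inl (n, m)))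
        (Sum.inr (Sum.inr n')) (Sum.inr (Sum.inl (n', m)))
        (by simp [hnn]) (by simp) (by simp) (by simp [Prod.ext_iff, hnn])
  -- rewrite the integrand
  have hexp : ∀ ω, ∑ m, ‖Matrix.vecMul
        (fun n => c2 * hbar₂ n + d2 * ht₂ ω n)
        (Matrix.diagonal φd * (c1 • Hbar₁ + d1 • Ht₁ ω)) m + g ω m‖ ^ 2
      = ∑ m, ‖(∑ n, (c2 * hbar₂ n + d2 * ht₂ ω n)
            * (φd n * (c1 * Hbar₁ n m + d1 * Ht₁ ω n m))) + g ω m‖ ^ 2 := by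
    intro ω
    refine Finset.sum_congr rfl fun m _ => ?_
    congr 2
    simp [Matrix.vecMul, dotProduct, Matrix.diagonal_mul, Matrix.add_apply,
      Matrix.smul_apply, smul_eq_mul]
  rw [integral_congr_ae (ae_of_all _ hexp)]
  have haeall : ∀ᵐ ω ∂μ, ∀ i, f i ω = f' i ω := ae_all_iff.2 hae
  have step2 : ∫ ω, ∑ m, ‖(∑ n, (c2 * hbar₂ n + d2 * ht₂ ω n)
            * (φd n * (c1 * Hbar₁ n m + d1 * Ht₁ ω n m))) + g ω m‖ ^ 2 ∂μ
      = ∫ ω, ∑ m, ‖(∑ n, (c2 * hbar₂ n + d2 * U' n ω)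
            * (φd n * (c1 * Hbar₁ n m + d1 * T' n m ω))) + G' m ω‖ ^ 2 ∂μ := by
    refine integral_congr_ae ?_
    filter_upwards [haeall] with ω hω
    have h1 : ∀ m, g ω m = G' m ω := fun m => hω (Sum.inl m)
    have h2 : ∀ n m, Ht₁ ω n m = T' n m ω := fun n m => hω (Sum.inr (Sum.inl (n, m)))
    have h3 : ∀ n, ht₂ ω n = U' n ω := fun n => hω (Sum.inr (Sum.inr n))
    simp only [h1, h2, h3]
  rw [step2, integral_finset_sum _ fun m _ => (perm m).1]
  have hvec : ∀ m, Matrix.vecMul hbar₂ (Matrix.diagonal φd * Hbar₁) m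
      = ∑ n, hbar₂ n * (φd n * Hbar₁ n m) := by
    intro m
    simp [Matrix.vecMul, dotProduct, Matrix.diagonal_mul]
  calc ∑ m, ∫ ω, ‖(∑ n, (c2 * hbar₂ n + d2 * U' n ω)
            * (φd n * (c1 * Hbar₁ n m + d1 * T' n m ω))) + G' m ω‖ ^ 2 ∂μ
      = ∑ m : Fin M, ((K₁ * K₂ / ((K₁ + 1) * (K₂ + 1)))
            * ‖∑ n, hbar₂ n * (φd n * Hbar₁ n m)‖ ^ 2
          + ((K₁ + K₂ + 1) / ((K₁ + 1) * (K₂ + 1))) * N + 1) := by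
        refine Finset.sum_congr rfl fun m _ => ?_
        rw [(perm m).2, nc1, nc2, nd1, nd2]
        have e1 : K₁ / (K₁ + 1) * (K₂ / (K₂ + 1)) = K₁ * K₂ / ((K₁ + 1) * (K₂ + 1)) := by
          field_simp
        have e2 : K₂ / (K₂ + 1) * (1 / (K₁ + 1)) + 1 / (K₂ + 1) * (K₁ / (K₁ + 1))
            + 1 / (K₂ + 1) * (1 / (K₁ + 1))
            = (K₁ + K₂ + 1) / ((K₁ + 1) * (K₂ + 1)) := by
          field_simp
          ring
        rw [e1, e2]
    _ = (K₁ * K₂ / ((K₁ + 1) * (K₂ + 1)))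
          * ∑ m, ‖Matrix.vecMul hbar₂ (Matrix.diagonal φd * Hbar₁) m‖ ^ 2
        + ((K₁ + K₂ + 1) / ((K₁ + 1) * (K₂ + 1))) * M * N + M := by
        simp only [hvec, Finset.sum_add_distrib, Finset.sum_const, Finset.card_univ,
          Fintype.card_fin, nsmul_eq_mul, ← Finset.mul_sum]
        ring
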